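/- Let n ≥ 1 and λ_1,…,λ_n, μ_1,…,μ_n be reals. Define the n!×n! matrix T_0, indexed by permutations of {1,…,n}, by T_0(q,p) = ∑_{i=2}^n λ_{q_i} + ∑_{i=1}^n μ_{q_i} if q = p; T_0(q,p) = −λ_{q_1} if q = h_j(p) for some j ∈ {2,…,n} (where h_j(p) moves the j-th element of p to the front); and T_0(q,p) = 0 otherwise. Then every column of T_0 sums to ∑_{i=1}^n μ_i; consequently, for any vectors v, c indexed by permutations with T_0 v = c, one has (∑_{i=1}^n μ_i) · ∑_p v_p = ∑_q c_q. -/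

import Mathlib

/-- Every column of the matrix `T₀` of the single-source heterogeneous SHS sums to
`∑ᵢ μᵢ`; consequently `T₀ v = c` implies `(∑ᵢ μᵢ) ∑ₚ vₚ = ∑_q c_q`.
Here `h_j(p)` (moving the j-th element of `p` to the front) is, in 0-based form,
`p * (Fin.cycleRange j)⁻¹` for `j ≠ 0`. -/
theorem stmt_10 (n : ℕ) (hn : 0 < n) (lam mu : Fin n → ℝ)
    (T0 : Matrix (Equiv.Perm (Fin n)) (Equiv.Perm (Fin n)) ℝ)
    (hdiag : ∀ q : Equiv.Perm (Fin n),
      T0 q q = (∑ i ∈ Finset.univ.filter (fun i : Fin n => i ≠ ⟨0, hn⟩), lam (q i))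
        + ∑ i : Fin n, mu (q i))
    (hoff : ∀ (p : Equiv.Perm (Fin n)) (j : Fin n), j ≠ ⟨0, hn⟩ →
      T0 (p * (Fin.cycleRange j)⁻¹) p = -lam ((p * (Fin.cycleRange j)⁻¹) ⟨0, hn⟩))
    (hzero : ∀ q p : Equiv.Perm (Fin n), q ≠ p →
      (∀ j : Fin n, j ≠ ⟨0, hn⟩ → q ≠ p * (Fin.cycleRange j)⁻¹) → T0 q p = 0) :
    (∀ p : Equiv.Perm (Fin n), ∑ q : Equiv.Perm (Fin n), T0 q p = ∑ i : Fin n, mu i) ∧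
    ∀ v c : Equiv.Perm (Fin n) → ℝ, T0.mulVec v = c →
      (∑ i : Fin n, mu i) * ∑ p : Equiv.Perm (Fin n), v p
        = ∑ q : Equiv.Perm (Fin n), c q := by
  obtain ⟨m, rfl⟩ : ∃ m, n = m + 1 := ⟨n - 1, (Nat.succ_pred_eq_of_pos hn).symm⟩
  set z : Fin (m + 1) := ⟨0, hn⟩ with hz
  have hinv : ∀ j : Fin (m + 1), (Fin.cycleRange j)⁻¹ z = j := by
    intro j
    have h1 : Fin.cycleRange j j = z := by
      rw [Fin.cycleRange_self]; rfl
    rw [← h1]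
    exact Equiv.symm_apply_apply _ _
  have colsum : ∀ p : Equiv.Perm (Fin (m + 1)), ∑ q : Equiv.Perm (Fin (m + 1)), T0 q p
      = ∑ i : Fin (m + 1), mu i := by
    intro p
    set s : Finset (Equiv.Perm (Fin (m + 1))) :=
      insert p ((Finset.univ.filter (fun j : Fin (m + 1) => j ≠ z)).image
        (fun j => p * (Fin.cycleRange j)⁻¹)) with hs
    have hne : ∀ j : Fin (m + 1), j ≠ z → p * (Fin.cycleRange j)⁻¹ ≠ p := by
      intro j hj h
      have h1 : (Fin.cycleRange j)⁻¹ = 1 :=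
        mul_left_cancel (a := p) (by rw [mul_one]; exact h)
      have h2 := hinv j
      rw [h1] at h2
      exact hj h2.symm
    have hinj : ∀ j ∈ Finset.univ.filter (fun j : Fin (m + 1) => j ≠ z),
        ∀ j' ∈ Finset.univ.filter (fun j : Fin (m + 1) => j ≠ z),
        p * (Fin.cycleRange j)⁻¹ = p * (Fin.cycleRange j')⁻¹ → j = j' := by
      intro j _ j' _ h
      have h2 := mul_left_cancel h
      have : (Fin.cycleRange j)⁻¹ z = (Fin.cycleRange j')⁻¹ z := by rw [h2]
      rwa [hinv, hinv] at this
    have hsub : s ⊆ Finset.univ := Finset.subset_univ s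
    have hzero' : ∀ q ∈ Finset.univ, q ∉ s → T0 q p = 0 := by
      intro q _ hq
      apply hzero q p
      · intro h; exact hq (by rw [hs, h]; exact Finset.mem_insert_self _ _)
      · intro j hj h
        exact hq (by
          rw [hs]
          refine Finset.mem_insert_of_mem ?_
          exact Finset.mem_image.mpr ⟨j, Finset.mem_filter.mpr ⟨Finset.mem_univ _, hj⟩, h.symm⟩)
    rw [← Finset.sum_subset hsub hzero']
    have hpnot : p ∉ (Finset.univ.filter (fun j : Fin (m + 1) => j ≠ z)).image
        (fun j => p * (Fin.cycleRange j)⁻¹) := by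
      intro h
      obtain ⟨j, hj, hj2⟩ := Finset.mem_image.mp h
      exact hne j (Finset.mem_filter.mp hj).2 hj2
    rw [hs, Finset.sum_insert hpnot, Finset.sum_image hinj, hdiag]
    have hval : ∀ j : Fin (m + 1), (p * (Fin.cycleRange j)⁻¹) z = p j := by
      intro j
      simp only [Equiv.Perm.mul_apply, hinv]
    have hoffval : ∀ j ∈ Finset.univ.filter (fun j : Fin (m + 1) => j ≠ z),
        T0 (p * (Fin.cycleRange j)⁻¹) p = -lam (p j) := by
      intro j hj
      rw [hoff p j (Finset.mem_filter.mp hj).2]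
      exact congrArg (fun x => -lam x) (hval j)
    rw [Finset.sum_congr rfl hoffval, Finset.sum_neg_distrib]
    have hperm : ∑ i : Fin (m + 1), mu (p i) = ∑ i : Fin (m + 1), mu i :=
      Equiv.sum_comp p mu
    rw [hperm]
    ring
  refine ⟨colsum, ?_⟩
  intro v c hvc
  have hc : ∀ q, c q = ∑ p : Equiv.Perm (Fin (m + 1)), T0 q p * v p := by
    intro q
    rw [← hvc]
    rfl
  calc (∑ i : Fin (m + 1), mu i) * ∑ p : Equiv.Perm (Fin (m + 1)), v p
      = ∑ p : Equiv.Perm (Fin (m + 1)), (∑ q : Equiv.Perm (Fin (m + 1)), T0 q p) * v p := by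
        rw [Finset.mul_sum]
        exact Finset.sum_congr rfl fun p _ => by rw [colsum p]
    _ = ∑ p : Equiv.Perm (Fin (m + 1)), ∑ q : Equiv.Perm (Fin (m + 1)), T0 q p * v p :=
        Finset.sum_congr rfl fun p _ => by rw [Finset.sum_mul]
    _ = ∑ q : Equiv.Perm (Fin (m + 1)), ∑ p : Equiv.Perm (Fin (m + 1)), T0 q p * v p :=
        Finset.sum_comm
    _ = ∑ q : Equiv.Perm (Fin (m + 1)), c q :=
        Finset.sum_congr rfl fun q _ => (hc q).symm
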